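/- Let f : ℝⁿ → ℝ be a multivariate quartic polynomial and let C := Σ_{i=1}^n ∇²f_{ii} (a constant symmetric n×n matrix), where f_{ii} := ∂²f/∂x_i². If C is not positive semidefinite, then for every x ∈ ℝⁿ there exists t̄ > 0 such that the matrix ∇²f(x) + (t̄²/6)·C (i.e., ∇_{xx}μ_f(x,t̄)) is not positive semidefinite. In particular there exist no t₀ > 0 and L > 0 such that μ_f(·,t) is convex on the closed Euclidean ball B[0,L] for all t > t₀. -/

import Mathlib

open MeasureTheory Matrix Filter
open MvPolynomial

/-- Partial derivative of `f` in the `i`-th coordinate direction. -/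
noncomputable def pd {n : ℕ} (i : Fin n) (f : (Fin n → ℝ) → ℝ) : (Fin n → ℝ) → ℝ :=
  fun x => fderiv ℝ f x (Pi.single i 1)

/-- The gradient of `f` at `x`, as a vector of first partial derivatives. -/
noncomputable def grad {n : ℕ} (f : (Fin n → ℝ) → ℝ) (x : Fin n → ℝ) : Fin n → ℝ :=
  fun i => pd i f x

/-- The Hessian matrix of `f` at `x`, of second partial derivatives. -/
noncomputable def hess {n : ℕ} (f : (Fin n → ℝ) → ℝ) (x : Fin n → ℝ) :
    Matrix (Fin n) (Fin n) ℝ :=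
  Matrix.of fun i j => pd i (pd j f) x

/-- The Steklov function `μ_f(x,t) = (1/(2t)^n) ∫_{x-t}^{x+t} ⋯ ∫ f`. -/
noncomputable def steklov {n : ℕ} (f : (Fin n → ℝ) → ℝ) (x : Fin n → ℝ) (t : ℝ) : ℝ :=
  (1 / (2 * t) ^ n) * ∫ τ in Set.univ.pi (fun i => Set.Icc (x i - t) (x i + t)), f τ

/-- `f` is a multivariate quartic polynomial: a polynomial of total degree at most 4. -/
def IsMQP {n : ℕ} (f : (Fin n → ℝ) → ℝ) : Prop :=
  ∃ P : MvPolynomial (Fin n) ℝ, P.totalDegree ≤ 4 ∧ ∀ x, f x = MvPolynomial.eval x P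

/-- The closed Euclidean (ℓ₂) ball of radius `L` centered at `0` in `ℝⁿ`. -/
def ball2 {n : ℕ} (L : ℝ) : Set (Fin n → ℝ) := {y | ∑ i, (y i) ^ 2 ≤ L ^ 2}

/-- The Euclidean (ℓ₂) norm of a vector. -/
noncomputable def l2norm {m : ℕ} (v : Fin m → ℝ) : ℝ := Real.sqrt (∑ i, (v i) ^ 2)


lemma hasFDerivAt_eval {n : ℕ} (P : MvPolynomial (Fin n) ℝ) (x : Fin n → ℝ) :
    HasFDerivAt (fun y => eval y P)
      (∑ i, eval x (pderiv i P) • (ContinuousLinearMap.proj i : (Fin n → ℝ) →L[ℝ] ℝ)) x := by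
  induction P using MvPolynomial.induction_on with
  | C a =>
      simp only [eval_C, pderiv_C, map_zero, zero_smul, Finset.sum_const_zero]
      exact hasFDerivAt_const a x
  | add p q hp hq =>
      simp only [map_add, add_smul, Finset.sum_add_distrib]
      exact hp.add hq
  | mul_X p j hp =>
      have hxj : HasFDerivAt (fun y : Fin n → ℝ => y j)
          (ContinuousLinearMap.proj j : (Fin n → ℝ) →L[ℝ] ℝ) x := by
        exact (ContinuousLinearMap.proj (R := ℝ) (φ := fun _ : Fin n => ℝ) j).hasFDerivAt
      have h := hp.mul hxj
      have heq : (fun y => eval y (p * X j)) = fun y => eval y p * y j := by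
        funext y; simp
      rw [heq]
      refine h.congr_fderiv ?_
      symm
      ext u
      simp only [pderiv_mul, map_add, eval_mul, eval_X,
        ContinuousLinearMap.sum_apply, ContinuousLinearMap.smul_apply,
        ContinuousLinearMap.proj_apply, ContinuousLinearMap.add_apply, smul_eq_mul]
      have hsplit : ∀ i : Fin n, ((eval x) ((pderiv i) p) * x j + (eval x) p * (eval x) ((pderiv i) (X j))) * u i
          = (eval x) ((pderiv i) p) * x j * u i + (eval x) (p * (pderiv i) (X j)) * u i := by
        intro i; simp [eval_mul]; ring
      rw [Finset.sum_congr rfl (fun i _ => hsplit i), Finset.sum_add_distrib]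
      have h2 : ∀ i : Fin n, eval x (p * (pderiv i) (X j)) * u i
            = (if i = j then eval x p * u i else 0) := by
        intro i
        rcases eq_or_ne i j with h | h
        · subst h; simp [pderiv_X_self]
        · simp [pderiv_X_of_ne (Ne.symm h), h]
      rw [Finset.sum_congr rfl (fun i _ => h2 i), Finset.sum_ite_eq' Finset.univ j
        (fun i => eval x p * u i)]
      simp only [Finset.mem_univ, if_true]
      rw [Finset.mul_sum]
      rw [add_comm]
      congr 1
      apply Finset.sum_congr rfl; intro i _; ring

lemma pd_eval {n : ℕ} (P : MvPolynomial (Fin n) ℝ) (i : Fin n) :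
    pd i (fun y => eval y P) = fun y => eval y (pderiv i P) := by
  funext x
  unfold pd
  rw [(hasFDerivAt_eval P x).fderiv]
  simp only [ContinuousLinearMap.sum_apply, ContinuousLinearMap.smul_apply,
    ContinuousLinearMap.proj_apply, smul_eq_mul]
  simp only [Pi.single_apply, mul_ite, mul_one, mul_zero]
  rw [Finset.sum_ite_eq' Finset.univ i]
  simp

/-- directional derivative polynomial -/
noncomputable def dirD {n : ℕ} (w : Fin n → ℝ) (Q : MvPolynomial (Fin n) ℝ) :
    MvPolynomial (Fin n) ℝ := ∑ i, MvPolynomial.C (w i) * pderiv i Q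

lemma eval_dirD {n : ℕ} (w : Fin n → ℝ) (Q : MvPolynomial (Fin n) ℝ) (z : Fin n → ℝ) :
    eval z (dirD w Q) = ∑ i, w i * eval z (pderiv i Q) := by
  simp [dirD]

lemma line_hasDerivAt {n : ℕ} (Q : MvPolynomial (Fin n) ℝ) (x w : Fin n → ℝ) (s : ℝ) :
    HasDerivAt (fun s : ℝ => eval (x + s • w) Q) (eval (x + s • w) (dirD w Q)) s := by
  have hline : HasDerivAt (fun s : ℝ => x + s • w) w s := by
    simpa using ((hasDerivAt_id s).smul_const w).const_add x
  have h := (hasFDerivAt_eval Q (x + s • w)).comp_hasDerivAt s hline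
  refine h.congr_deriv ?_
  symm
  rw [eval_dirD]
  simp only [ContinuousLinearMap.sum_apply, ContinuousLinearMap.smul_apply,
    ContinuousLinearMap.proj_apply, smul_eq_mul]
  apply Finset.sum_congr rfl; intro i _; ring

lemma td_pderiv {n : ℕ} (i : Fin n) (Q : MvPolynomial (Fin n) ℝ) (d : ℕ)
    (h : Q.totalDegree ≤ d + 1) : (pderiv i Q).totalDegree ≤ d := by
  conv_lhs => rw [← support_sum_monomial_coeff Q]
  rw [map_sum]
  refine le_trans (totalDegree_finset_sum _ _) (Finset.sup_le ?_)
  intro m hm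
  rw [pderiv_monomial]
  rcases Nat.eq_zero_or_pos (m i) with h0 | h0
  · rw [h0]; simp
  · refine le_trans (totalDegree_monomial_le _ _) ?_
    have hle : Finsupp.single i 1 ≤ m := by
      rw [Finsupp.single_le_iff]; exact h0
    have hsum : (m - Finsupp.single i 1).sum (fun _ e => e) + (Finsupp.single i 1).sum (fun _ e => e)
        = m.sum (fun _ e => e) := by
      rw [← Finsupp.sum_add_index' (fun _ => rfl) (fun _ _ _ => rfl), tsub_add_cancel_of_le hle]
    have h1 : (Finsupp.single i (1:ℕ)).sum (fun _ e => e) = 1 := by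
      simp [Finsupp.sum_single_index]
    have hm4 : m.sum (fun _ e => e) ≤ d + 1 := le_trans (le_totalDegree hm) h
    have : (m - Finsupp.single i 1).sum (fun _ e => e) ≤ d := by omega
    exact le_trans (le_of_eq (by congr)) this

lemma pderiv_comm {n : ℕ} (i j : Fin n) (Q : MvPolynomial (Fin n) ℝ) :
    pderiv i (pderiv j Q) = pderiv j (pderiv i Q) := by
  rcases eq_or_ne i j with h | h
  · subst h; rfl
  · induction Q using MvPolynomial.induction_on' with
    | monomial m a =>
        rw [pderiv_monomial, pderiv_monomial, pderiv_monomial, pderiv_monomial]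
        have hij : (m - Finsupp.single j 1 : Fin n →₀ ℕ) i = m i := by
          simp [Finsupp.tsub_apply, Finsupp.single_apply, Ne.symm h]
        have hji : (m - Finsupp.single i 1 : Fin n →₀ ℕ) j = m j := by
          simp [Finsupp.tsub_apply, Finsupp.single_apply, h]
        rw [hij, hji]
        have : m - Finsupp.single j 1 - Finsupp.single i 1
            = m - Finsupp.single i 1 - Finsupp.single j 1 := by
          rw [tsub_tsub, tsub_tsub, add_comm]
        rw [this]
        ring_nf
    | add p q hp hq => simp [map_add, hp, hq]

lemma eval_const_of_td_zero {n : ℕ} {Q : MvPolynomial (Fin n) ℝ} (h : Q.totalDegree = 0)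
    (x y : Fin n → ℝ) : eval x Q = eval y Q := by
  rw [eval_eq, eval_eq]
  apply Finset.sum_congr rfl
  intro m hm
  have hm0 : m = 0 := by
    ext a
    exact (totalDegree_eq_zero_iff _ Q).1 h m hm a
  subst hm0
  simp

lemma antider (b₀ b₁ b₂ b₃ : ℝ) (α β : ℝ → ℝ) (hd : ∀ s, HasDerivAt α (β s) s)
    (hβ : ∀ s, β s = b₀ + b₁*s + b₂*s^2 + b₃*s^3) :
    ∀ s, α s = α 0 + b₀*s + b₁*s^2/2 + b₂*s^3/3 + b₃*s^4/4 := by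
  intro s
  set γ : ℝ → ℝ := fun u => α u - (α 0 + b₀*u + b₁*u^2/2 + b₂*u^3/3 + b₃*u^4/4) with hγ
  have hpoly : ∀ u : ℝ, HasDerivAt
      (fun u : ℝ => α 0 + b₀*u + b₁*u^2/2 + b₂*u^3/3 + b₃*u^4/4)
      (b₀ + b₁*u + b₂*u^2 + b₃*u^3) u := by
    intro u
    have h1 : HasDerivAt (fun u : ℝ => u) 1 u := hasDerivAt_id u
    have h2 : HasDerivAt (fun u : ℝ => u^2) (2*u^(2-1)) u := hasDerivAt_pow 2 u
    have h3 : HasDerivAt (fun u : ℝ => u^3) (3*u^(3-1)) u := hasDerivAt_pow 3 u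
    have h4 : HasDerivAt (fun u : ℝ => u^4) (4*u^(4-1)) u := hasDerivAt_pow 4 u
    have := (((((hasDerivAt_const u (α 0)).add (h1.const_mul b₀)).add
      ((h2.const_mul (b₁/2)))).add ((h3.const_mul (b₂/3)))).add ((h4.const_mul (b₃/4))))
    convert this using 1
    · rfl
    · rfl
    · funext u; simp only [Pi.add_apply]; ring
    · push_cast; ring
  have hγd : ∀ u, HasDerivAt γ 0 u := by
    intro u
    have := (hd u).sub (hpoly u)
    rw [hβ u] at this
    simp at this
    exact this
  have hconst : γ s = γ 0 :=
    is_const_of_deriv_eq_zero (fun u => (hγd u).differentiableAt)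
      (fun u => (hγd u).deriv) s 0
  have h0 : γ 0 = 0 := by simp [hγ]
  have := hconst.trans h0
  simp only [hγ] at this
  linarith

/-- quartic second-difference: φ₀ with 4 derivatives, 4th constant. -/
lemma eng4 (φ₀ φ₁ φ₂ φ₃ φ₄ : ℝ → ℝ) (c : ℝ)
    (h0 : ∀ s, HasDerivAt φ₀ (φ₁ s) s) (h1 : ∀ s, HasDerivAt φ₁ (φ₂ s) s)
    (h2 : ∀ s, HasDerivAt φ₂ (φ₃ s) s) (h3 : ∀ s, HasDerivAt φ₃ (φ₄ s) s)
    (hc : ∀ s, φ₄ s = c) :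
    φ₀ 1 + φ₀ (-1) - 2 * φ₀ 0 = φ₂ 0 + c / 12 := by
  have e3 : ∀ s, φ₃ s = φ₃ 0 + c*s + 0*s^2/2 + 0*s^3/3 + 0*s^4/4 :=
    antider c 0 0 0 φ₃ φ₄ h3 (fun s => by rw [hc]; ring)
  have e2 : ∀ s, φ₂ s = φ₂ 0 + (φ₃ 0)*s + c*s^2/2 + 0*s^3/3 + 0*s^4/4 :=
    antider (φ₃ 0) c 0 0 φ₂ φ₃ h2 (fun s => by rw [e3 s]; ring)
  have e1 : ∀ s, φ₁ s = φ₁ 0 + (φ₂ 0)*s + (φ₃ 0)*s^2/2 + (c/2)*s^3/3 + 0*s^4/4 :=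
    antider (φ₂ 0) (φ₃ 0) (c/2) 0 φ₁ φ₂ h1 (fun s => by rw [e2 s]; ring)
  have e0 : ∀ s, φ₀ s = φ₀ 0 + (φ₁ 0)*s + (φ₂ 0)*s^2/2 + ((φ₃ 0)/2)*s^3/3 + (c/6)*s^4/4 :=
    antider (φ₁ 0) (φ₂ 0) ((φ₃ 0)/2) (c/6) φ₀ φ₁ h0 (fun s => by rw [e1 s]; ring)
  rw [e0 1, e0 (-1), e0 0]; ring

/-- quadratic evaluation: φ₀ with 2 derivatives, 2nd constant. -/
lemma eng2 (φ₀ φ₁ φ₂ : ℝ → ℝ) (c : ℝ)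
    (h0 : ∀ s, HasDerivAt φ₀ (φ₁ s) s) (h1 : ∀ s, HasDerivAt φ₁ (φ₂ s) s)
    (hc : ∀ s, φ₂ s = c) :
    φ₀ 1 = φ₀ 0 + φ₁ 0 + c / 2 := by
  have e1 : ∀ s, φ₁ s = φ₁ 0 + c*s + 0*s^2/2 + 0*s^3/3 + 0*s^4/4 :=
    antider c 0 0 0 φ₁ φ₂ h1 (fun s => by rw [hc]; ring)
  have e0 : ∀ s, φ₀ s = φ₀ 0 + (φ₁ 0)*s + c*s^2/2 + 0*s^3/3 + 0*s^4/4 :=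
    antider (φ₁ 0) c 0 0 φ₀ φ₁ h0 (fun s => by rw [e1 s]; ring)
  rw [e0 1]; ring

/-- the centered box `[-t,t]^n` -/
def box0 (n : ℕ) (t : ℝ) : Set (Fin n → ℝ) := Set.univ.pi (fun _ => Set.Icc (-t) t)

lemma box0_measurable {n : ℕ} (t : ℝ) : MeasurableSet (box0 n t) :=
  MeasurableSet.univ_pi (fun _ => measurableSet_Icc)

lemma box0_compact {n : ℕ} (t : ℝ) : IsCompact (box0 n t) :=
  isCompact_univ_pi (fun _ => isCompact_Icc)

lemma box0_volume {n : ℕ} {t : ℝ} (ht : 0 < t) :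
    (volume (box0 n t)).toReal = (2*t)^n := by
  rw [box0, volume_pi_pi]
  simp only [Real.volume_Icc]
  rw [Finset.prod_const]
  rw [ENNReal.toReal_pow, ENNReal.toReal_ofReal (by linarith)]
  simp [Finset.card_univ]
  ring_nf

/-- Fubini for a product of 1-D functions over the box -/
lemma fub {n : ℕ} (t : ℝ) (h : Fin n → ℝ → ℝ) :
    ∫ σ in box0 n t, ∏ i, h i (σ i) = ∏ i, ∫ s in Set.Icc (-t) t, h i s := by
  rw [← integral_indicator (box0_measurable t)]
  have hind : (box0 n t).indicator (fun σ => ∏ i, h i (σ i))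
      = fun σ => ∏ i, (Set.Icc (-t) t).indicator (h i) (σ i) := by
    funext σ
    by_cases hh : σ ∈ box0 n t
    · rw [Set.indicator_of_mem hh]
      apply Finset.prod_congr rfl
      intro i _
      rw [Set.indicator_of_mem ((Set.mem_univ_pi).1 hh i)]
    · rw [Set.indicator_of_notMem hh]
      have : ¬ ∀ i, σ i ∈ Set.Icc (-t) t := by
        intro hall
        exact hh (Set.mem_univ_pi.2 hall)
      push_neg at this
      obtain ⟨j, hj⟩ := this
      exact (Finset.prod_eq_zero (Finset.mem_univ j)
        (by rw [Set.indicator_of_notMem hj])).symm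
  rw [hind]
  rw [volume_pi]
  beta_reduce
  rw [MeasureTheory.integral_fintype_prod_eq_prod
    (fun i => (Set.Icc (-t) t).indicator (h i))]
  apply Finset.prod_congr rfl
  intro i _
  rw [integral_indicator measurableSet_Icc]

lemma mom0 {t : ℝ} (ht : 0 < t) : ∫ _ in Set.Icc (-t) t, (1:ℝ) = 2*t := by
  rw [setIntegral_const]
  rw [Real.volume_real_Icc_of_le (by linarith), smul_eq_mul, mul_one]
  ring

lemma mom1 (t : ℝ) : ∫ s in Set.Icc (-t) t, s = 0 := by
  rcases le_or_gt (-t) t with h | h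
  · rw [integral_Icc_eq_integral_Ioc, ← intervalIntegral.integral_of_le h, integral_id]
    ring
  · rw [Set.Icc_eq_empty (by linarith)]
    simp

lemma mom2 {t : ℝ} (ht : 0 < t) : ∫ s in Set.Icc (-t) t, s^2 = 2*t^3/3 := by
  rw [integral_Icc_eq_integral_Ioc, ← intervalIntegral.integral_of_le (by linarith), integral_pow]
  ring_nf

lemma int_coord {n : ℕ} (t : ℝ) (k : Fin n) : ∫ σ in box0 n t, σ k = 0 := by
  have hrw : (fun σ : Fin n → ℝ => σ k)
      = fun σ => ∏ i, (fun s : ℝ => if i = k then s else 1) (σ i) := by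
    funext σ
    rw [Finset.prod_ite_eq' Finset.univ k (fun i => σ i)]
    simp
  rw [hrw, fub t (fun i s => if i = k then s else 1)]
  exact Finset.prod_eq_zero (Finset.mem_univ k) (by simp [mom1 t])

lemma int_coord2 {n : ℕ} {t : ℝ} (ht : 0 < t) (k l : Fin n) :
    ∫ σ in box0 n t, σ k * σ l = if k = l then (2*t)^n * t^2/3 else 0 := by
  have hrw : (fun σ : Fin n → ℝ => σ k * σ l) = fun σ =>
      ∏ i, (fun s : ℝ => (if i = k then s else 1) * (if i = l then s else 1)) (σ i) := by
    funext σ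
    simp only [Finset.prod_mul_distrib]
    rw [Finset.prod_ite_eq' Finset.univ k (fun i => σ i),
        Finset.prod_ite_eq' Finset.univ l (fun i => σ i)]
    simp
  rw [hrw, fub t (fun i s => (if i = k then s else 1) * (if i = l then s else 1))]
  rcases eq_or_ne k l with h | h
  · subst h
    rw [if_pos rfl]
    have hval : ∀ i : Fin n, (∫ s in Set.Icc (-t) t,
        (if i = k then s else 1) * (if i = k then s else 1))
        = if i = k then 2*t^3/3 else 2*t := by
      intro i
      rcases eq_or_ne i k with h | h
      · rw [if_pos h]
        simp only [show (fun s : ℝ => (if i = k then s else 1) * if i = k then s else 1)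
          = fun s : ℝ => s^2 from funext fun s => by rw [if_pos h]; ring]
        exact mom2 ht
      · rw [if_neg h]
        simp only [show (fun s : ℝ => (if i = k then s else 1) * if i = k then s else 1)
          = fun _ : ℝ => (1:ℝ) from funext fun s => by rw [if_neg h]; ring]
        exact mom0 ht
    rw [Finset.prod_congr rfl (fun i _ => hval i)]
    rw [← Finset.mul_prod_erase Finset.univ _ (Finset.mem_univ k)]
    rw [if_pos rfl]
    have herase : ∀ i ∈ Finset.univ.erase k,
        (if i = k then 2*t^3/3 else 2*t) = 2*t := by
      intro i hi
      rw [if_neg (Finset.ne_of_mem_erase hi)]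
    rw [Finset.prod_congr rfl herase, Finset.prod_const,
      Finset.card_erase_of_mem (Finset.mem_univ k), Finset.card_univ, Fintype.card_fin]
    have hn : n - 1 + 1 = n := Nat.succ_pred_eq_of_pos k.pos
    rw [show (2*t)^n = (2*t)^(n-1+1) by rw [hn], pow_succ]
    ring
  · rw [if_neg h]
    refine Finset.prod_eq_zero (Finset.mem_univ k) ?_
    simp only [if_pos rfl, if_neg h, mul_one]
    exact mom1 t

lemma int_quad {n : ℕ} {t : ℝ} (ht : 0 < t) (a : ℝ) (b : Fin n → ℝ)
    (G : Fin n → Fin n → ℝ) (g : (Fin n → ℝ) → ℝ)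
    (hg : ∀ σ, g σ = a + (∑ k, b k * σ k) + (1/2) * ∑ k, ∑ l, G k l * (σ k * σ l)) :
    ∫ σ in box0 n t, g σ = (2*t)^n * a + (2*t)^n * (t^2/6) * ∑ k, G k k := by
  have hIlin : ∀ k : Fin n, IntegrableOn (fun σ : Fin n → ℝ => b k * σ k) (box0 n t) :=
    fun k => ((continuous_const.mul (continuous_apply k) : Continuous fun σ : Fin n → ℝ => b k * σ k).continuousOn).integrableOn_compact
      (box0_compact t)
  have hIlinsum : IntegrableOn (fun σ : Fin n → ℝ => ∑ k, b k * σ k) (box0 n t) :=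
    ((continuous_finset_sum _ (fun k _ => (continuous_const.mul (continuous_apply k) : Continuous fun σ : Fin n → ℝ => b k * σ k))).continuousOn
      ).integrableOn_compact (box0_compact t)
  have hIq : ∀ k l : Fin n, IntegrableOn (fun σ : Fin n → ℝ => G k l * (σ k * σ l)) (box0 n t) :=
    fun k l => ((continuous_const.mul ((continuous_apply k).mul (continuous_apply l)) : Continuous fun σ : Fin n → ℝ => G k l * (σ k * σ l)).continuousOn).integrableOn_compact (box0_compact t)
  have hIqsuminner : ∀ k : Fin n,
      IntegrableOn (fun σ : Fin n → ℝ => ∑ l, G k l * (σ k * σ l)) (box0 n t) := by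
    intro k
    exact ((continuous_finset_sum _ (fun l _ => (continuous_const.mul ((continuous_apply k).mul (continuous_apply l)) : Continuous fun σ : Fin n → ℝ => G k l * (σ k * σ l)))).continuousOn).integrableOn_compact (box0_compact t)
  have hIqsum : IntegrableOn
      (fun σ : Fin n → ℝ => (1/2) * ∑ k, ∑ l, G k l * (σ k * σ l)) (box0 n t) := by
    exact ((continuous_const.mul (continuous_finset_sum _ (fun k _ => continuous_finset_sum _
      (fun l _ => (continuous_const.mul ((continuous_apply k).mul (continuous_apply l)) : Continuous fun σ : Fin n → ℝ => G k l * (σ k * σ l)))))).continuousOn).integrableOn_compact (box0_compact t)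
  have hIconst : IntegrableOn (fun _ : Fin n → ℝ => a) (box0 n t) :=
    integrableOn_const (box0_compact t).measure_lt_top.ne
  have hI1 : IntegrableOn (fun σ : Fin n → ℝ => a + ∑ k, b k * σ k) (box0 n t) := by
    exact hIconst.add hIlinsum
  simp_rw [hg]
  rw [integral_add hI1 hIqsum]
  rw [integral_add hIconst hIlinsum]
  rw [setIntegral_const, measureReal_def, box0_volume ht, smul_eq_mul]
  rw [integral_finset_sum _ (fun k _ => hIlin k)]
  have hlin0 : ∀ k : Fin n, ∫ σ in box0 n t, b k * σ k = 0 := by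
    intro k
    rw [integral_const_mul, int_coord t k, mul_zero]
  rw [Finset.sum_congr rfl (fun k _ => hlin0 k), Finset.sum_const_zero, add_zero]
  rw [integral_const_mul]
  rw [integral_finset_sum _ (fun k _ => hIqsuminner k)]
  have hqk : ∀ k : Fin n, ∫ σ in box0 n t, (∑ l, G k l * (σ k * σ l))
      = G k k * ((2*t)^n * t^2/3) := by
    intro k
    rw [integral_finset_sum _ (fun l _ => hIq k l)]
    have : ∀ l : Fin n, ∫ σ in box0 n t, G k l * (σ k * σ l)
        = if k = l then G k l * ((2*t)^n * t^2/3) else 0 := by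
      intro l
      rw [integral_const_mul, int_coord2 ht k l]
      rcases eq_or_ne k l with h | h
      · simp [h]
      · simp [h]
    rw [Finset.sum_congr rfl (fun l _ => this l), Finset.sum_ite_eq Finset.univ k
      (fun l => G k l * ((2*t)^n * t^2/3))]
    simp
  rw [Finset.sum_congr rfl (fun k _ => hqk k), ← Finset.sum_mul]
  ring

lemma tra {n : ℕ} (P : MvPolynomial (Fin n) ℝ) (x : Fin n → ℝ) (t : ℝ) :
    ∫ τ in Set.univ.pi (fun i => Set.Icc (x i - t) (x i + t)), MvPolynomial.eval τ P
      = ∫ σ in box0 n t, MvPolynomial.eval (x + σ) P := by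
  have hbm : MeasurableSet (Set.univ.pi fun i => Set.Icc (x i - t) (x i + t)) :=
    MeasurableSet.univ_pi fun i => measurableSet_Icc
  rw [← integral_indicator hbm, ← integral_indicator (box0_measurable t)]
  rw [← MeasureTheory.integral_add_left_eq_self
    ((Set.univ.pi fun i => Set.Icc (x i - t) (x i + t)).indicator
      (fun τ => MvPolynomial.eval τ P)) x]
  congr 1
  funext σ
  have hmem : x + σ ∈ (Set.univ.pi fun i => Set.Icc (x i - t) (x i + t)) ↔ σ ∈ box0 n t := by
    simp only [box0, Set.mem_univ_pi, Pi.add_apply, Set.mem_Icc]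
    constructor <;> (intro hh i; obtain ⟨h1, h2⟩ := hh i; constructor <;> linarith)
  by_cases hσ : σ ∈ box0 n t
  · rw [Set.indicator_of_mem (hmem.2 hσ), Set.indicator_of_mem hσ]
  · rw [Set.indicator_of_notMem (fun hc => hσ (hmem.1 hc)), Set.indicator_of_notMem hσ]

lemma pderiv_dirD {n : ℕ} (k : Fin n) (w : Fin n → ℝ) (Q : MvPolynomial (Fin n) ℝ) :
    MvPolynomial.pderiv k (dirD w Q) = dirD w (MvPolynomial.pderiv k Q) := by
  unfold dirD
  rw [map_sum]
  apply Finset.sum_congr rfl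
  intro i _
  rw [MvPolynomial.pderiv_C_mul, pderiv_comm k i]

lemma td_dirD {n : ℕ} (w : Fin n → ℝ) (Q : MvPolynomial (Fin n) ℝ) (d : ℕ)
    (h : Q.totalDegree ≤ d + 1) : (dirD w Q).totalDegree ≤ d := by
  refine le_trans (MvPolynomial.totalDegree_finset_sum _ _) (Finset.sup_le fun i _ => ?_)
  refine le_trans (MvPolynomial.totalDegree_mul _ _) ?_
  rw [MvPolynomial.totalDegree_C, zero_add]
  exact td_pderiv i Q d h

lemma hess_eval {n : ℕ} (Q : MvPolynomial (Fin n) ℝ) (x : Fin n → ℝ) :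
    hess (fun y => MvPolynomial.eval y Q) x
      = Matrix.of (fun i j => MvPolynomial.eval x
          (MvPolynomial.pderiv i (MvPolynomial.pderiv j Q))) := by
  unfold hess
  funext i j
  simp only [Matrix.of_apply]
  rw [pd_eval Q j, pd_eval (MvPolynomial.pderiv j Q) i]

lemma hexp_gen {n : ℕ} (z : Fin n → ℝ) (R : MvPolynomial (Fin n) ℝ) :
    eval (0 : Fin n → ℝ) (dirD z (dirD z R))
      = ∑ k, ∑ l, eval (0 : Fin n → ℝ) (pderiv k (pderiv l R)) * (z k * z l) := by
  rw [eval_dirD]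
  have h1 : ∀ i, eval (0 : Fin n → ℝ) (pderiv i (dirD z R))
      = ∑ j, z j * eval (0 : Fin n → ℝ) (pderiv j (pderiv i R)) := by
    intro i; rw [pderiv_dirD, eval_dirD]
  rw [Finset.sum_congr rfl (fun i (_ : i ∈ Finset.univ) => by rw [h1 i])]
  simp_rw [Finset.mul_sum]
  rw [Finset.sum_comm]
  apply Finset.sum_congr rfl; intro k _
  apply Finset.sum_congr rfl; intro l _
  ring

lemma quad_taylor {n : ℕ} (Q2 : MvPolynomial (Fin n) ℝ) (tQ2 : Q2.totalDegree ≤ 2)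
    (σ : Fin n → ℝ) :
    eval σ Q2 = eval 0 Q2 + (∑ k, eval (0 : Fin n → ℝ) (pderiv k Q2) * σ k)
      + (1/2) * ∑ k, ∑ l, eval (0 : Fin n → ℝ) (pderiv k (pderiv l Q2)) * (σ k * σ l) := by
  have h0 : ∀ s : ℝ, HasDerivAt (fun u : ℝ => eval ((0 : Fin n → ℝ) + u • σ) Q2)
      (eval ((0 : Fin n → ℝ) + s • σ) (dirD σ Q2)) s := fun s => line_hasDerivAt Q2 0 σ s
  have h1 : ∀ s : ℝ, HasDerivAt (fun u : ℝ => eval ((0 : Fin n → ℝ) + u • σ) (dirD σ Q2))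
      (eval ((0 : Fin n → ℝ) + s • σ) (dirD σ (dirD σ Q2))) s :=
    fun s => line_hasDerivAt _ 0 σ s
  have tD2 : (dirD σ (dirD σ Q2)).totalDegree = 0 :=
    Nat.le_zero.1 (td_dirD σ _ 0 (td_dirD σ _ 1 tQ2))
  have hcc : ∀ s : ℝ, eval ((0 : Fin n → ℝ) + s • σ) (dirD σ (dirD σ Q2))
      = eval (0 : Fin n → ℝ) (dirD σ (dirD σ Q2)) :=
    fun s => eval_const_of_td_zero tD2 _ 0
  have key := eng2 _ _ _ (eval (0 : Fin n → ℝ) (dirD σ (dirD σ Q2))) h0 h1 hcc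
  have key2 : eval ((0 : Fin n → ℝ) + (1:ℝ) • σ) Q2
      = eval ((0 : Fin n → ℝ) + (0:ℝ) • σ) Q2
        + eval ((0 : Fin n → ℝ) + (0:ℝ) • σ) (dirD σ Q2)
        + eval (0 : Fin n → ℝ) (dirD σ (dirD σ Q2)) / 2 := key
  rw [show (0 : Fin n → ℝ) + (1:ℝ) • σ = σ by rw [one_smul, zero_add],
      show (0 : Fin n → ℝ) + (0:ℝ) • σ = 0 by rw [zero_smul, add_zero]] at key2
  rw [key2, eval_dirD, hexp_gen σ Q2]
  rw [Finset.sum_congr rfl (fun k (_ : k ∈ Finset.univ) =>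
    mul_comm (σ k) (eval (0 : Fin n → ℝ) (pderiv k Q2)))]
  ring

lemma quart_diff {n : ℕ} (P : MvPolynomial (Fin n) ℝ) (hP4 : P.totalDegree ≤ 4)
    (w σ : Fin n → ℝ) :
    eval (w + σ) P + eval (-w + σ) P - 2 * eval σ P
      = eval σ (dirD w (dirD w P))
        + eval (0 : Fin n → ℝ) (dirD w (dirD w (dirD w (dirD w P)))) / 12 := by
  have h0 : ∀ s : ℝ, HasDerivAt (fun u : ℝ => eval (σ + u • w) P)
      (eval (σ + s • w) (dirD w P)) s := fun s => line_hasDerivAt P σ w s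
  have h1 : ∀ s : ℝ, HasDerivAt (fun u : ℝ => eval (σ + u • w) (dirD w P))
      (eval (σ + s • w) (dirD w (dirD w P))) s := fun s => line_hasDerivAt _ σ w s
  have h2 : ∀ s : ℝ, HasDerivAt (fun u : ℝ => eval (σ + u • w) (dirD w (dirD w P)))
      (eval (σ + s • w) (dirD w (dirD w (dirD w P)))) s := fun s => line_hasDerivAt _ σ w s
  have h3 : ∀ s : ℝ, HasDerivAt (fun u : ℝ => eval (σ + u • w) (dirD w (dirD w (dirD w P))))
      (eval (σ + s • w) (dirD w (dirD w (dirD w (dirD w P))))) s :=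
    fun s => line_hasDerivAt _ σ w s
  have tD4 : (dirD w (dirD w (dirD w (dirD w P)))).totalDegree = 0 :=
    Nat.le_zero.1 (td_dirD w _ 0 (td_dirD w _ 1 (td_dirD w _ 2 (td_dirD w P 3 hP4))))
  have hcc : ∀ s : ℝ, eval (σ + s • w) (dirD w (dirD w (dirD w (dirD w P))))
      = eval (0 : Fin n → ℝ) (dirD w (dirD w (dirD w (dirD w P)))) :=
    fun s => eval_const_of_td_zero tD4 _ 0
  have key := eng4 _ _ _ _ _
    (eval (0 : Fin n → ℝ) (dirD w (dirD w (dirD w (dirD w P))))) h0 h1 h2 h3 hcc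
  have key2 : eval (σ + (1:ℝ) • w) P + eval (σ + (-1:ℝ) • w) P - 2 * eval (σ + (0:ℝ) • w) P
      = eval (σ + (0:ℝ) • w) (dirD w (dirD w P))
        + eval (0 : Fin n → ℝ) (dirD w (dirD w (dirD w (dirD w P)))) / 12 := key
  rw [show σ + (1:ℝ) • w = w + σ by rw [one_smul]; exact add_comm σ w,
      show σ + (-1:ℝ) • w = -w + σ by rw [neg_one_smul]; exact add_comm σ (-w),
      show σ + (0:ℝ) • w = σ by rw [zero_smul, add_zero]] at key2
  exact key2
/-- If `C := Σᵢ ∇²f_{ii}` is not positive semidefinite, then for every `x` there is `t̄ > 0`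
such that `∇²f(x) + (t̄²/6)·C` is not positive semidefinite; in particular there are no
`t₀ > 0` and `L > 0` such that `μ_f(·,t)` is convex on `B[0,L]` for all `t > t₀`. -/
theorem steklov_not_convexifiable {n : ℕ} (f : (Fin n → ℝ) → ℝ) (hf : IsMQP f)
    (C : Matrix (Fin n) (Fin n) ℝ)
    (hC : ∀ x : Fin n → ℝ, (∑ i, hess (pd i (pd i f)) x) = C)
    (hCnotPSD : ¬ C.PosSemidef) :
    (∀ x : Fin n → ℝ, ∃ tb > (0 : ℝ), ¬ (hess f x + (tb ^ 2 / 6) • C).PosSemidef)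
    ∧ ¬ ∃ t₀ > (0 : ℝ), ∃ L > (0 : ℝ), ∀ t > t₀,
        ConvexOn ℝ (ball2 L) (fun y => steklov f y t) := by
  obtain ⟨P, hP4, hfP⟩ := hf
  have hfeq : f = fun x => eval x P := funext hfP
  subst hfeq
  have hstar : ∀ y : Fin n → ℝ, star y = y := fun y => funext fun i => star_trivial _
  have hC' : ∀ (x : Fin n → ℝ) (k l : Fin n), C k l
      = ∑ i, eval x (pderiv k (pderiv l (pderiv i (pderiv i P)))) := by
    intro x k l
    rw [← hC x, Matrix.sum_apply]
    apply Finset.sum_congr rfl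
    intro i _
    have hpd : pd i (pd i (fun y => eval y P)) = fun y => eval y (pderiv i (pderiv i P)) := by
      rw [pd_eval P i, pd_eval (pderiv i P) i]
    rw [hpd, hess_eval]
    rfl
  have hCsymm : ∀ k l, C k l = C l k := by
    intro k l
    rw [hC' 0 k l, hC' 0 l k]
    apply Finset.sum_congr rfl
    intro i _
    rw [pderiv_comm k l]
  have hCH : C.IsHermitian := by
    ext i j
    rw [Matrix.conjTranspose_apply, star_trivial]
    exact hCsymm j i
  have hv : ∃ v : Fin n → ℝ, v ⬝ᵥ C *ᵥ v < 0 := by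
    by_contra hcon
    push_neg at hcon
    exact hCnotPSD (Matrix.PosSemidef.of_dotProduct_mulVec_nonneg hCH fun y => by rw [hstar y]; exact hcon y)
  obtain ⟨v, hvneg⟩ := hv
  constructor
  · -- PART 1
    intro x
    have hHv : ∀ s : ℝ, v ⬝ᵥ ((hess (fun y => eval y P) x) + s • C) *ᵥ v
        = v ⬝ᵥ (hess (fun y => eval y P) x) *ᵥ v + s * (v ⬝ᵥ C *ᵥ v) := by
      intro s
      rw [Matrix.add_mulVec, dotProduct_add, Matrix.smul_mulVec, dotProduct_smul]
      simp [smul_eq_mul]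
    set r := v ⬝ᵥ (hess (fun y => eval y P) x) *ᵥ v with hr
    set c := v ⬝ᵥ C *ᵥ v with hc
    refine ⟨Real.sqrt (max 1 ((6*r+6)/(-c))), Real.sqrt_pos.2
      (lt_of_lt_of_le one_pos (le_max_left _ _)), ?_⟩
    intro hPSD
    have hkey := hPSD.dotProduct_mulVec_nonneg v
    rw [hstar v] at hkey
    rw [hHv] at hkey
    have hsq : Real.sqrt (max 1 ((6*r+6)/(-c))) ^ 2 = max 1 ((6*r+6)/(-c)) :=
      Real.sq_sqrt (le_trans zero_le_one (le_max_left _ _))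
    have hge : (6*r+6)/(-c) ≤ Real.sqrt (max 1 ((6*r+6)/(-c))) ^ 2 :=
      le_trans (le_max_right 1 ((6*r+6)/(-c))) (le_of_eq hsq.symm)
    have h1 : Real.sqrt (max 1 ((6*r+6)/(-c))) ^ 2 * c ≤ (6*r+6)/(-c) * c :=
      mul_le_mul_of_nonpos_right hge (le_of_lt hvneg)
    have h2 : (6*r+6)/(-c) * c = -(6*r+6) := by
      have hc0 : c ≠ 0 := ne_of_lt hvneg
      rw [div_mul_eq_mul_div, mul_div_assoc, div_neg, div_self hc0]
      ring
    have h3 : Real.sqrt (max 1 ((6*r+6)/(-c))) ^ 2 / 6 * c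
        = (Real.sqrt (max 1 ((6*r+6)/(-c))) ^ 2 * c) / 6 := by ring
    rw [h3] at hkey
    linarith
  · -- PART 2
    rintro ⟨t₀, ht₀, L, hL, hconv⟩
    have hvne : v ≠ 0 := by
      intro h0
      rw [h0] at hvneg
      simp at hvneg
    have hS : 0 < ∑ i, v i ^ 2 := by
      rcases Function.ne_iff.1 hvne with ⟨i, hi⟩
      have hipos : 0 < v i ^ 2 := by
        have := mul_self_pos.mpr hi
        nlinarith [this]
      exact Finset.sum_pos' (fun j _ => sq_nonneg _) ⟨i, Finset.mem_univ i, hipos⟩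
    have hhpos : 0 < L / Real.sqrt (∑ i, v i ^ 2) := div_pos hL (Real.sqrt_pos.2 hS)
    set w : Fin n → ℝ := (L / Real.sqrt (∑ i, v i ^ 2)) • v with hw
    have hwsum : ∑ i, (w i)^2 = L^2 := by
      rw [hw]
      simp only [Pi.smul_apply, smul_eq_mul, mul_pow, ← Finset.mul_sum]
      rw [div_pow, Real.sq_sqrt hS.le, div_mul_cancel₀ _ (ne_of_gt hS)]
    have hwb : w ∈ ball2 L := le_of_eq hwsum
    have hwnb : -w ∈ ball2 L := by
      show ∑ i, ((-w) i)^2 ≤ L^2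
      have : ∀ i, ((-w) i)^2 = (w i)^2 := fun i => by rw [Pi.neg_apply]; ring
      rw [Finset.sum_congr rfl (fun i _ => this i)]
      exact le_of_eq hwsum
    have h0b : (0 : Fin n → ℝ) ∈ ball2 L := by
      show ∑ i, ((0:Fin n → ℝ) i)^2 ≤ L^2
      simp only [Pi.zero_apply]
      simp
      positivity
    have hγneg : w ⬝ᵥ C *ᵥ w < 0 := by
      rw [hw, smul_dotProduct, Matrix.mulVec_smul, dotProduct_smul]
      simp only [smul_eq_mul]
      have := mul_neg_of_pos_of_neg (mul_pos hhpos hhpos) hvneg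
      nlinarith [this]
    set γ : ℝ := w ⬝ᵥ C *ᵥ w with hγdef
    have tQ2 : (dirD w (dirD w P)).totalDegree ≤ 2 := td_dirD w _ 2 (td_dirD w P 3 hP4)
    set A : ℝ := eval (0 : Fin n → ℝ) (dirD w (dirD w P))
      + eval (0 : Fin n → ℝ) (dirD w (dirD w (dirD w (dirD w P)))) / 12 with hA
    -- sum of diagonal second-derivative coefficients equals γ = wᵀCw
    have hsumG : ∑ k, eval (0 : Fin n → ℝ) (pderiv k (pderiv k (dirD w (dirD w P)))) = γ := by
      have hswap : ∀ k : Fin n, pderiv k (pderiv k (dirD w (dirD w P)))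
          = dirD w (dirD w (pderiv k (pderiv k P))) := by
        intro k; simp only [pderiv_dirD]
      rw [Finset.sum_congr rfl (fun k (_ : k ∈ Finset.univ) =>
        by rw [hswap k, hexp_gen w (pderiv k (pderiv k P))])]
      rw [hγdef, dotProduct]
      simp only [Matrix.mulVec, dotProduct]
      rw [Finset.sum_comm]
      apply Finset.sum_congr rfl
      intro i _
      rw [Finset.mul_sum, Finset.sum_comm]
      apply Finset.sum_congr rfl
      intro j _
      rw [← Finset.sum_mul, ← hC' 0 i j]
      ring
    -- exact quadratic representation of the second difference
    have hgrep : ∀ σ : Fin n → ℝ,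
        (fun σ : Fin n → ℝ =>
          eval (w + σ) P + eval (-w + σ) P - 2 * eval ((0 : Fin n → ℝ) + σ) P) σ
        = A + (∑ k, eval (0 : Fin n → ℝ) (pderiv k (dirD w (dirD w P))) * σ k)
          + (1/2) * ∑ k, ∑ l,
              eval (0 : Fin n → ℝ) (pderiv k (pderiv l (dirD w (dirD w P)))) * (σ k * σ l) := by
      intro σ
      simp only [zero_add]
      rw [quart_diff P hP4 w σ, quad_taylor _ tQ2 σ, hA]
      ring
    -- choice of t
    have hargnn : 0 ≤ 6 * (|A| + 1) / (-γ) := div_nonneg (by positivity) (by linarith)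
    set t := max (t₀ + 1) (Real.sqrt (6 * (|A| + 1) / (-γ))) with htdef
    have htgt : t₀ < t := lt_of_lt_of_le (lt_add_one t₀) (le_max_left _ _)
    have htpos : 0 < t := lt_of_lt_of_le (by linarith) (le_max_left _ _)
    have ht2 : 6 * (|A| + 1) / (-γ) ≤ t ^ 2 := by
      have h1 : Real.sqrt (6 * (|A| + 1) / (-γ)) ≤ t := le_max_right _ _
      calc 6 * (|A| + 1) / (-γ) = Real.sqrt (6 * (|A| + 1) / (-γ)) ^ 2 :=
            (Real.sq_sqrt hargnn).symm
        _ ≤ t ^ 2 := pow_le_pow_left₀ (Real.sqrt_nonneg _) h1 2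
    -- the box integral
    have hint : ∫ σ in box0 n t,
        (eval (w + σ) P + eval (-w + σ) P - 2 * eval ((0 : Fin n → ℝ) + σ) P)
        = (2*t)^n * A + (2*t)^n * (t^2/6) * γ := by
      rw [int_quad htpos A (fun k => eval (0 : Fin n → ℝ) (pderiv k (dirD w (dirD w P))))
        (fun k l => eval (0 : Fin n → ℝ) (pderiv k (pderiv l (dirD w (dirD w P))))) _ hgrep,
        hsumG]
    have hIcont : ∀ x : Fin n → ℝ,
        IntegrableOn (fun σ : Fin n → ℝ => eval (x + σ) P) (box0 n t) := fun x =>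
      (((MvPolynomial.continuous_eval P).comp (continuous_const.add continuous_id)
        : Continuous fun σ : Fin n → ℝ => eval (x + σ) P).continuousOn).integrableOn_compact
        (box0_compact t)
    have hsplit : ∫ σ in box0 n t,
        (eval (w + σ) P + eval (-w + σ) P - 2 * eval ((0 : Fin n → ℝ) + σ) P)
        = (∫ σ in box0 n t, eval (w + σ) P) + (∫ σ in box0 n t, eval (-w + σ) P)
          - 2 * ∫ σ in box0 n t, eval ((0 : Fin n → ℝ) + σ) P := by
      have hAdd : IntegrableOn (fun σ : Fin n → ℝ =>
          eval (w + σ) P + eval (-w + σ) P) (box0 n t) := (hIcont w).add (hIcont (-w))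
      have hMul : IntegrableOn (fun σ : Fin n → ℝ =>
          2 * eval ((0 : Fin n → ℝ) + σ) P) (box0 n t) := (hIcont 0).const_mul 2
      rw [integral_sub hAdd hMul, integral_add (hIcont w) (hIcont (-w)), integral_const_mul]
    have hstek : ∀ x : Fin n → ℝ, steklov (fun y => eval y P) x t
        = (1/(2*t)^n) * ∫ σ in box0 n t, eval (x + σ) P := by
      intro x
      simp only [steklov]
      rw [tra P x t]
    have hcvx := (hconv t htgt).2 hwb hwnb (by norm_num : (0:ℝ) ≤ 1/2)
      (by norm_num : (0:ℝ) ≤ 1/2) (by norm_num : (1/2:ℝ) + 1/2 = 1)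
    have hmid : (1/2:ℝ) • w + (1/2:ℝ) • (-w) = 0 := by
      rw [smul_neg]; exact add_neg_cancel _
    rw [hmid] at hcvx
    have hpow : ((2*t:ℝ))^n ≠ 0 := pow_ne_zero n (by linarith)
    have hSt : steklov (fun y => eval y P) w t + steklov (fun y => eval y P) (-w) t
        - 2 * steklov (fun y => eval y P) 0 t = A + t^2/6*γ := by
      rw [hstek w, hstek (-w), hstek 0]
      have hfactor : (1/(2*t)^n) * (∫ σ in box0 n t, eval (w + σ) P)
          + (1/(2*t)^n) * (∫ σ in box0 n t, eval (-w + σ) P)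
          - 2 * ((1/(2*t)^n) * ∫ σ in box0 n t, eval ((0 : Fin n → ℝ) + σ) P)
          = (1/(2*t)^n) * ((∫ σ in box0 n t, eval (w + σ) P)
            + (∫ σ in box0 n t, eval (-w + σ) P)
            - 2 * ∫ σ in box0 n t, eval ((0 : Fin n → ℝ) + σ) P) := by ring
      rw [hfactor, ← hsplit, hint]
      field_simp
    have hfin1 : 0 ≤ A + t^2/6*γ := by
      rw [← hSt]
      simp only [smul_eq_mul] at hcvx
      linarith
    have hmul : t^2 * γ ≤ (6 * (|A| + 1) / (-γ)) * γ :=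
      mul_le_mul_of_nonpos_right ht2 hγneg.le
    have heq : (6 * (|A| + 1) / (-γ)) * γ = -(6 * (|A| + 1)) := by
      have hγ0 : γ ≠ 0 := ne_of_lt hγneg
      rw [div_mul_eq_mul_div, mul_div_assoc, div_neg, div_self hγ0]
      ring
    have habs : A ≤ |A| := le_abs_self A
    have hdiv : t^2/6*γ = (t^2*γ)/6 := by ring
    have h5 : t^2*γ ≤ -(6*(|A|+1)) := by linarith
    have h6 : A + t^2/6*γ ≤ A - (|A|+1) := by linarith
    have h7 : (0:ℝ) ≤ A - (|A|+1) := le_trans hfin1 h6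
    linarith [le_abs_self A, h7]
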